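/- Mutual information as the measure of the content intersection: for random variables X : Ω → α and Y : Ω → β, H(X) + H(Y) − H(⟨X,Y⟩) = Σ_{S ∈ C(X) ∩ C(Y)} L°(S), where ⟨X,Y⟩ : Ω → α × β is the joint variable ω ↦ (X(ω), Y(ω)). -/

import Mathlib

open Finset
open scoped Classical

/-- The total loss of a finite family of reals:
`L(p_1, …, p_n) = Σ_i p_i log(1/p_i) − (Σ_i p_i) log(1/Σ_i p_i)`. -/
noncomputable def totalLoss {ι : Type*} (s : Finset ι) (p : ι → ℝ) : ℝ :=
  ∑ i ∈ s, p i * Real.log (1 / p i) - (∑ i ∈ s, p i) * Real.log (1 / ∑ i ∈ s, p i)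

/-- The interior loss, defined by inclusion–exclusion:
`L°(p_1, …, p_n) = Σ_{S ⊆ {1,…,n}} (−1)^{n−|S|} L((p_i)_{i∈S})`. -/
noncomputable def interiorLoss {ι : Type*} [DecidableEq ι] (s : Finset ι) (p : ι → ℝ) : ℝ :=
  ∑ T ∈ s.powerset, (-1 : ℝ) ^ (s.card - T.card) * totalLoss T p

/-- The probability that the random variable `X : Ω → α` takes the value `a`,
with respect to the mass function `P`. -/
noncomputable def probOf {Ω α : Type*} [Fintype Ω] (P : Ω → ℝ) (X : Ω → α) (a : α) : ℝ :=
  ∑ ω ∈ Finset.univ.filter (fun ω => X ω = a), P ω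

/-- The Shannon entropy `H(X) = Σ_{a ∈ X(Ω)} P(X = a) log(1/P(X = a))` of a random
variable `X : Ω → α` with respect to the mass function `P`. -/
noncomputable def entropy {Ω α : Type*} [Fintype Ω] (P : Ω → ℝ) (X : Ω → α) : ℝ :=
  ∑ a ∈ Finset.univ.image X, probOf P X a * Real.log (1 / probOf P X a)

/-- The content `C(X)` of a random variable `X : Ω → α`: the collection of subsets
`S ⊆ Ω` with `|S| ≥ 2` on which `X` is not constant. -/
noncomputable def content {Ω α : Type*} [Fintype Ω] (X : Ω → α) : Finset (Finset Ω) :=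
  Finset.univ.filter (fun S => 2 ≤ S.card ∧ ∃ ω ∈ S, ∃ ω2 ∈ S, X ω ≠ X ω2)

lemma totalLoss_empty {ι : Type*} (p : ι → ℝ) : totalLoss (∅ : Finset ι) p = 0 := by
  simp [totalLoss]

lemma interiorLoss_empty {ι : Type*} [DecidableEq ι] (p : ι → ℝ) :
    interiorLoss (∅ : Finset ι) p = 0 := by
  simp [interiorLoss, totalLoss_empty]

lemma mySignSum {ι : Type*} [DecidableEq ι] {U T : Finset ι} (hU : U ⊆ T) :
    ∑ S ∈ T.powerset, (if U ⊆ S then (-1:ℝ)^(S.card - U.card) else 0)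
      = if U = T then 1 else 0 := by
  rw [← Finset.sum_filter]
  have key : ∑ S ∈ T.powerset.filter (fun S => U ⊆ S), (-1:ℝ)^(S.card - U.card)
      = ∑ V ∈ (T \ U).powerset, (-1:ℝ)^V.card := by
    refine Finset.sum_nbij' (fun S => S \ U) (fun V => V ∪ U) ?_ ?_ ?_ ?_ ?_
    · intro S hS
      simp only [mem_filter, mem_powerset] at hS ⊢
      exact sdiff_subset_sdiff hS.1 (le_refl _)
    · intro V hV
      simp only [mem_powerset] at hV
      simp only [mem_filter, mem_powerset]
      exact ⟨union_subset (hV.trans (sdiff_subset)) hU, subset_union_right⟩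
    · intro S hS
      simp only [mem_filter, mem_powerset] at hS
      exact sdiff_union_of_subset hS.2
    · intro V hV
      simp only [mem_powerset] at hV
      show (V ∪ U) \ U = V
      rw [Finset.union_sdiff_cancel_right]
      exact disjoint_of_subset_left hV sdiff_disjoint
    · intro S hS
      simp only [mem_filter, mem_powerset] at hS
      rw [card_sdiff_of_subset hS.2]
  rw [key]
  have := @Finset.sum_powerset_neg_one_pow_card ι _ (T \ U)
  have h2 : ∑ V ∈ (T \ U).powerset, (-1:ℝ)^V.card
      = ((∑ V ∈ (T \ U).powerset, (-1:ℤ)^V.card : ℤ) : ℝ) := by push_cast; rfl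
  rw [h2, this]
  by_cases h : T \ U = ∅
  · have : U = T := le_antisymm hU (sdiff_eq_empty_iff_subset.1 h)
    simp [h, this]
  · have : U ≠ T := by
      intro he; exact h (by simp [he])
    simp [h, this]

lemma sum_interiorLoss_powerset {ι : Type*} [DecidableEq ι] (T : Finset ι) (p : ι → ℝ) :
    ∑ S ∈ T.powerset, interiorLoss S p = totalLoss T p := by
  unfold interiorLoss
  have step : ∀ S ∈ T.powerset,
      ∑ U ∈ S.powerset, (-1:ℝ)^(S.card - U.card) * totalLoss U p
        = ∑ U ∈ T.powerset, (if U ⊆ S then (-1:ℝ)^(S.card - U.card) else 0) * totalLoss U p := by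
    intro S hS
    rw [mem_powerset] at hS
    have hpow : S.powerset = T.powerset.filter (fun U => U ⊆ S) := by
      ext U; simp only [mem_powerset, mem_filter]
      exact ⟨fun h => ⟨h.trans hS, h⟩, fun h => h.2⟩
    rw [hpow, Finset.sum_filter]
    refine Finset.sum_congr rfl fun U _ => ?_
    by_cases h : U ⊆ S <;> simp [h]
  rw [Finset.sum_congr rfl step, Finset.sum_comm]
  have : ∀ U ∈ T.powerset,
      ∑ S ∈ T.powerset, (if U ⊆ S then (-1:ℝ)^(S.card - U.card) else 0) * totalLoss U p
        = (if U = T then 1 else 0) * totalLoss U p := by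
    intro U hU
    rw [← Finset.sum_mul, mySignSum (mem_powerset.1 hU)]
  rw [Finset.sum_congr rfl this]
  simp only [ite_mul, one_mul, zero_mul]
  rw [Finset.sum_ite_eq' T.powerset T]
  simp [Finset.mem_powerset_self]

section
variable {Ω α β : Type*} [Fintype Ω]

lemma entropy_eq_sum_content (P : Ω → ℝ) (hsum : ∑ ω, P ω = 1) (X : Ω → α) :
    entropy P X = ∑ S ∈ content X, interiorLoss S P := by
  classical
  set fib : α → Finset Ω := fun a => Finset.univ.filter (fun ω => X ω = a) with hfib
  have hTL_univ : totalLoss (Finset.univ : Finset Ω) P = ∑ ω, P ω * Real.log (1 / P ω) := by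
    simp [totalLoss, hsum]
  have hfiber_sum : ∑ a ∈ Finset.univ.image X, totalLoss (fib a) P
      = (∑ ω, P ω * Real.log (1 / P ω)) - entropy P X := by
    unfold totalLoss entropy probOf
    rw [Finset.sum_sub_distrib]
    congr 1
    exact Finset.sum_fiberwise_of_maps_to
      (fun x _ => Finset.mem_image_of_mem X (Finset.mem_univ x)) _
  have hcontent : content X
      = Finset.univ.filter (fun S => ∃ ω ∈ S, ∃ ω2 ∈ S, X ω ≠ X ω2) := by
    ext S
    simp only [content, mem_filter, mem_univ, true_and]
    constructor
    · rintro ⟨_, h⟩; exact h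
    · rintro ⟨ω, hω, ω2, hω2, hne⟩
      refine ⟨Finset.one_lt_card.2 ⟨ω, hω, ω2, hω2, fun h => hne (by rw [h])⟩,
        ω, hω, ω2, hω2, hne⟩
  -- the "constant" sets
  have hunivsum : ∑ S ∈ (Finset.univ : Finset (Finset Ω)), interiorLoss S P
      = totalLoss (Finset.univ : Finset Ω) P := by
    rw [← Finset.powerset_univ, sum_interiorLoss_powerset]
  set B : Finset (Finset Ω) :=
    (Finset.univ.image X).biUnion (fun a => ((fib a).powerset).erase ∅) with hB
  have hmemB : ∀ S : Finset Ω,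
      S ∈ B ↔ S.Nonempty ∧ ¬ (∃ ω ∈ S, ∃ ω2 ∈ S, X ω ≠ X ω2) := by
    intro S
    push_neg
    simp only [hB, Finset.mem_biUnion, Finset.mem_erase, Finset.mem_powerset, hfib]
    constructor
    · rintro ⟨a, ha, hne, hsub⟩
      refine ⟨Finset.nonempty_of_ne_empty hne, fun ω hω ω2 hω2 => ?_⟩
      have h1 := (Finset.mem_filter.1 (hsub hω)).2
      have h2 := (Finset.mem_filter.1 (hsub hω2)).2
      rw [h1, h2]
    · rintro ⟨⟨ω0, hω0⟩, hconst⟩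
      refine ⟨X ω0, Finset.mem_image_of_mem X (Finset.mem_univ ω0),
        Finset.nonempty_iff_ne_empty.1 ⟨ω0, hω0⟩, fun ω hω => ?_⟩
      exact Finset.mem_filter.2 ⟨Finset.mem_univ ω, hconst ω hω ω0 hω0⟩
  have hdisj : (↑(Finset.univ.image X) : Set α).PairwiseDisjoint
      (fun a => ((fib a).powerset).erase ∅) := by
    intro a _ b _ hab
    refine Finset.disjoint_left.2 fun S hSa hSb => ?_
    simp only [Finset.mem_erase, Finset.mem_powerset, hfib] at hSa hSb
    obtain ⟨ω0, hω0⟩ := Finset.nonempty_of_ne_empty hSa.1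
    have h1 := (Finset.mem_filter.1 (hSa.2 hω0)).2
    have h2 := (Finset.mem_filter.1 (hSb.2 hω0)).2
    exact hab (h1 ▸ h2 ▸ rfl)
  have hBsum : ∑ S ∈ B, interiorLoss S P
      = ∑ a ∈ Finset.univ.image X, totalLoss (fib a) P := by
    rw [hB, Finset.sum_biUnion hdisj]
    refine Finset.sum_congr rfl fun a _ => ?_
    rw [Finset.sum_erase (f := fun S => interiorLoss S P) (a := (∅ : Finset Ω)) _ (interiorLoss_empty P), sum_interiorLoss_powerset]
  have hnotsum : ∑ S ∈ Finset.univ.filter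
        (fun S : Finset Ω => ¬ ∃ ω ∈ S, ∃ ω2 ∈ S, X ω ≠ X ω2), interiorLoss S P
      = ∑ S ∈ B, interiorLoss S P := by
    refine (Finset.sum_subset ?_ ?_).symm
    · intro S hS
      rw [hmemB] at hS
      exact Finset.mem_filter.2 ⟨Finset.mem_univ S, hS.2⟩
    · intro S hS hSB
      rw [Finset.mem_filter] at hS
      by_cases hne : S.Nonempty
      · exact absurd ((hmemB S).2 ⟨hne, hS.2⟩) hSB
      · rw [Finset.not_nonempty_iff_eq_empty.1 hne]
        exact interiorLoss_empty P
  have hsplit := Finset.sum_filter_add_sum_filter_not (Finset.univ : Finset (Finset Ω))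
    (fun S : Finset Ω => ∃ ω ∈ S, ∃ ω2 ∈ S, X ω ≠ X ω2) (fun S => interiorLoss S P)
  rw [hcontent]
  have := hunivsum
  rw [hTL_univ] at this
  rw [hnotsum, hBsum, hfiber_sum] at hsplit
  linarith [hsplit, this]

lemma content_pair (X : Ω → α) (Y : Ω → β) :
    content (fun ω => (X ω, Y ω)) = content X ∪ content Y := by
  ext S
  simp only [content, Finset.mem_union, mem_filter, mem_univ, true_and, Prod.mk.injEq, ne_eq,
    not_and]
  constructor
  · rintro ⟨hc, ω, hω, ω2, hω2, hne⟩
    by_cases hx : X ω = X ω2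
    · exact Or.inr ⟨hc, ω, hω, ω2, hω2, hne hx⟩
    · exact Or.inl ⟨hc, ω, hω, ω2, hω2, hx⟩
  · rintro (⟨hc, ω, hω, ω2, hω2, hne⟩ | ⟨hc, ω, hω, ω2, hω2, hne⟩)
    · exact ⟨hc, ω, hω, ω2, hω2, fun h => absurd h hne⟩
    · exact ⟨hc, ω, hω, ω2, hω2, fun _ => hne⟩

end


/-- mutual information as the measure of the content intersection.
For `X : Ω → α` and `Y : Ω → β`,
`H(X) + H(Y) − H(⟨X,Y⟩) = Σ_{S ∈ C(X) ∩ C(Y)} L°(S)`. -/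
theorem mutualInformation_eq_sum_content_inter {Ω α β : Type*} [Fintype Ω] [Nonempty Ω]
    [Fintype α] [Fintype β] (P : Ω → ℝ) (hP : ∀ ω, 0 < P ω) (hsum : ∑ ω, P ω = 1)
    (X : Ω → α) (Y : Ω → β) :
    entropy P X + entropy P Y - entropy P (fun ω => (X ω, Y ω)) =
      ∑ S ∈ content X ∩ content Y, interiorLoss S P := by
  rw [entropy_eq_sum_content P hsum X, entropy_eq_sum_content P hsum Y,
    entropy_eq_sum_content P hsum (fun ω => (X ω, Y ω)), content_pair X Y]
  have := Finset.sum_union_inter (s₁ := content X) (s₂ := content Y)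
    (f := fun S => interiorLoss S P)
  linarith
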